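/- Let Γ be a reseminant graph. Then Γ is isomorphic to R̃_k for some integer k ≥ 0 if and only if Γ has at most one maximal K⁻_i induced subgraph with i ≥ 4. -/

import Mathlib

/-- The 5-cycle `C₅` on `Fin 5`. -/
def cycle5 : SimpleGraph (Fin 5) :=
  SimpleGraph.fromRel (fun i j => j = i + 1)

instance : DecidableRel cycle5.Adj := fun i j =>
  decidable_of_iff (i ≠ j ∧ (j = i + 1 ∨ i = j + 1)) Iff.rfl

/-- Duplicating the vertex `v'` of a simple graph `G`: a new vertex (the `Sum.inr` vertex) is
added, adjacent to `v'` and to every neighbor of `v'` in `G`. -/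
def dupGraph {V : Type*} (G : SimpleGraph V) (v' : V) : SimpleGraph (V ⊕ Unit) where
  Adj x y :=
    match x, y with
    | Sum.inl a, Sum.inl b => G.Adj a b
    | Sum.inl a, Sum.inr _ => a = v' ∨ G.Adj a v'
    | Sum.inr _, Sum.inl b => b = v' ∨ G.Adj b v'
    | Sum.inr _, Sum.inr _ => False
  symm := ⟨by
    rintro (a | a) (b | b) h
    · exact G.adj_symm h
    · exact h
    · exact h
    · exact h.elim⟩
  loopless := ⟨by
    rintro (a | a) h
    · exact G.irrefl h
    · exact h.elim⟩

instance dupGraphAdjDecidable {V : Type*} [DecidableEq V] (G : SimpleGraph V)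
    [DecidableRel G.Adj] (v' : V) : DecidableRel (dupGraph G v').Adj := fun x y =>
  match x, y with
  | Sum.inl a, Sum.inl b => inferInstanceAs (Decidable (G.Adj a b))
  | Sum.inl a, Sum.inr _ => inferInstanceAs (Decidable (a = v' ∨ G.Adj a v'))
  | Sum.inr _, Sum.inl b => inferInstanceAs (Decidable (b = v' ∨ G.Adj b v'))
  | Sum.inr _, Sum.inr _ => inferInstanceAs (Decidable False)

/-- The vertex type of the reseminant graph built from `C₅` by the duplications recorded in
the list `l` (each entry records which of the five original cycle vertices is duplicated). -/
def resemType : List (Fin 5) → Type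
  | [] => Fin 5
  | _ :: l => resemType l ⊕ Unit

instance resemTypeFintype : ∀ l : List (Fin 5), Fintype (resemType l)
  | [] => inferInstanceAs (Fintype (Fin 5))
  | _ :: l => letI := resemTypeFintype l; inferInstanceAs (Fintype (resemType l ⊕ Unit))

instance resemTypeDecEq : ∀ l : List (Fin 5), DecidableEq (resemType l)
  | [] => inferInstanceAs (DecidableEq (Fin 5))
  | _ :: l => letI := resemTypeDecEq l; inferInstanceAs (DecidableEq (resemType l ⊕ Unit))

/-- The copy, inside `resemType l`, of an original vertex of the 5-cycle. -/
def origVert : (l : List (Fin 5)) → Fin 5 → resemType l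
  | [], i => i
  | _ :: l, i => Sum.inl (origVert l i)

/-- The reseminant graph obtained from the 5-cycle `C₅` by the finite sequence of vertex
duplications recorded in `l`: for `l = v :: l'`, the vertex (the copy of the original cycle
vertex) `v` is duplicated in the graph built from `l'`. -/
def resemGraph : (l : List (Fin 5)) → SimpleGraph (resemType l)
  | [] => cycle5
  | v :: l => dupGraph (resemGraph l) (origVert l v)

instance resemGraphAdjDecidable : ∀ l : List (Fin 5), DecidableRel (resemGraph l).Adj
  | [] => inferInstanceAs (DecidableRel cycle5.Adj)
  | v :: l =>
    letI := resemGraphAdjDecidable l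
    inferInstanceAs (DecidableRel (dupGraph (resemGraph l) (origVert l v)).Adj)

/-- A simple graph is *reseminant* if it is (isomorphic to) a graph obtained from the 5-cycle
`C₅` by a finite sequence of vertex duplications, each duplicating one of the five original
cycle vertices. -/
def IsReseminant {V : Type*} (Γ : SimpleGraph V) : Prop :=
  ∃ l : List (Fin 5), Nonempty (Γ ≃g resemGraph l)

/-- `R̃_n`: the reseminant graph on `n + 5` vertices obtained from `C₅` by `n` successive
duplications, all duplicating the same fixed vertex `0` of the original 5-cycle. -/
def tildeR (n : ℕ) : SimpleGraph (resemType (List.replicate n 0)) :=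
  resemGraph (List.replicate n 0)

/-- The induced subgraph `Γ[s]` is isomorphic to `K⁻_{|s|}`, the complete graph on `|s|`
vertices with exactly one edge removed: there is a unique (unordered) pair of distinct
nonadjacent vertices in `s`, and all other pairs of distinct vertices of `s` are adjacent. -/
def IsKMinusOn {V : Type*} (Γ : SimpleGraph V) (s : Finset V) : Prop :=
  ∃ a ∈ s, ∃ b ∈ s, a ≠ b ∧ ¬Γ.Adj a b ∧
    ∀ x ∈ s, ∀ y ∈ s, x ≠ y → ¬Γ.Adj x y → (x = a ∧ y = b) ∨ (x = b ∧ y = a)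

/-- `Γ[s]` is a *maximal* `K⁻_{|s|}` induced subgraph of `Γ`: it is a `K⁻_{|s|}` induced
subgraph, and for every vertex `v` outside `s` the induced subgraph `Γ[s ∪ {v}]` is not a
`K⁻_{|s|+1}` induced subgraph. -/
def IsMaximalKMinusOn {V : Type*} [DecidableEq V] (Γ : SimpleGraph V) (s : Finset V) : Prop :=
  IsKMinusOn Γ s ∧ ∀ v ∉ s, ¬IsKMinusOn Γ (insert v s)


/-! ### Auxiliary development -/

/-- A `C₅`-structure on a graph: a classification of vertices into five classes such that
adjacency is exactly "same class (and distinct)" or "adjacent classes on the 5-cycle". -/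
def IsC5Struct {V : Type*} (Γ : SimpleGraph V) (c : V → Fin 5) : Prop :=
  ∀ u w, Γ.Adj u w ↔ u ≠ w ∧ (c u = c w ∨ cycle5.Adj (c u) (c w))

private lemma f5_nonadj : ∀ u v : Fin 5, u ≠ v → ¬cycle5.Adj u v →
    v = u + 2 ∨ u = v + 2 := by decide

private lemma f5_mid : ∀ u w : Fin 5, (w = u ∨ cycle5.Adj w u) →
    (w = u + 2 ∨ cycle5.Adj w (u + 2)) → w = u + 1 := by decide

private lemma f5_pair : ∀ j u v : Fin 5, (u = j + 4 ∨ u = j ∨ u = j + 1) →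
    (v = j + 4 ∨ v = j ∨ v = j + 1) → u ≠ v → ¬cycle5.Adj u v →
    (u = j + 4 ∧ v = j + 1) ∨ (u = j + 1 ∧ v = j + 4) := by decide

private lemma f5_common : ∀ j w : Fin 5, (w = j + 4 ∨ cycle5.Adj w (j + 4)) →
    (w = j + 1 ∨ cycle5.Adj w (j + 1)) → w = j := by decide

private lemma f5_rot : ∀ u w r : Fin 5, cycle5.Adj u w ↔ cycle5.Adj (u - r) (w - r) := by decide

private lemma f5_ne41 : ∀ j : Fin 5, j + 4 ≠ j + 1 := by decide

private lemma f5_ne4 : ∀ j : Fin 5, j ≠ j + 4 := by decide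

private lemma f5_ne1 : ∀ j : Fin 5, j ≠ j + 1 := by decide

private lemma f5_nadj41 : ∀ j : Fin 5, ¬cycle5.Adj (j + 4) (j + 1) := by decide

private lemma f5_suc0 : ∀ u : Fin 5, u + 1 = 0 → u = 4 := by decide

section StructResem

private lemma count_cons' (l : List (Fin 5)) (a v : Fin 5) :
    (v :: l).count a = l.count a + if a = v then 1 else 0 := by
  rw [List.count_cons]
  simp only [beq_iff_eq]
  by_cases h : a = v
  · simp [h]
  · rw [if_neg (fun hh : v = a => h hh.symm), if_neg h]

private lemma count_replicate' (k : ℕ) (i : Fin 5) :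
    (List.replicate k (0 : Fin 5)).count i = if i = 0 then k else 0 := by
  rw [List.count_replicate]
  simp only [beq_iff_eq]
  by_cases h : i = 0
  · simp [h]
  · rw [if_neg (fun hh : (0 : Fin 5) = i => h hh.symm), if_neg h]

/-- Every reseminant graph carries a `C₅`-structure whose fibers have sizes `count + 1`. -/
lemma struct_resem (l : List (Fin 5)) : ∃ c : resemType l → Fin 5,
    IsC5Struct (resemGraph l) c ∧ (∀ i, c (origVert l i) = i) ∧
    ∀ i : Fin 5, (Finset.univ.filter fun x => c x = i).card = l.count i + 1 := by
  induction l with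
  | nil =>
    refine ⟨id, ?_, fun i => rfl, by decide⟩
    intro u w
    constructor
    · exact fun h => ⟨h.ne, Or.inr h⟩
    · rintro ⟨hne, h | h⟩
      · exact absurd h hne
      · exact h
  | cons v l ih =>
    obtain ⟨c, hc, ho, hcard⟩ := ih
    have hov : c (origVert l v) = v := ho v
    refine ⟨Sum.elim c (fun _ => v), ?_, fun i => ho i, ?_⟩
    · rintro (a | a) (b | b)
      · show (resemGraph l).Adj a b ↔ _
        rw [hc]
        constructor
        · rintro ⟨hne, h⟩
          exact ⟨fun hh => hne (Sum.inl.inj hh), h⟩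
        · rintro ⟨hne, h⟩
          exact ⟨fun hh => hne (hh ▸ rfl), h⟩
      · show (a = origVert l v ∨ (resemGraph l).Adj a (origVert l v)) ↔ _
        rw [hc]
        simp only [Sum.elim_inl, Sum.elim_inr, hov, ne_eq]
        constructor
        · rintro (rfl | ⟨hne, h⟩)
          · exact ⟨(by intro hh; cases hh), Or.inl hov⟩
          · exact ⟨(by intro hh; cases hh), h⟩
        · rintro ⟨-, h⟩
          by_cases ha : a = origVert l v
          · exact Or.inl ha
          · exact Or.inr ⟨ha, h⟩
      · show (b = origVert l v ∨ (resemGraph l).Adj b (origVert l v)) ↔ _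
        rw [hc]
        simp only [Sum.elim_inl, Sum.elim_inr, hov, ne_eq]
        constructor
        · rintro (rfl | ⟨hne, h⟩)
          · refine ⟨(by intro hh; cases hh), Or.inl hov.symm⟩
          · refine ⟨(by intro hh; cases hh), ?_⟩
            rcases h with h | h
            · exact Or.inl h.symm
            · exact Or.inr (cycle5.adj_symm h)
        · rintro ⟨-, h⟩
          by_cases hb : b = origVert l v
          · exact Or.inl hb
          · refine Or.inr ⟨hb, ?_⟩
            rcases h with h | h
            · exact Or.inl h.symm
            · exact Or.inr (cycle5.adj_symm h)
      · show False ↔ _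
        constructor
        · exact False.elim
        · rintro ⟨hne, -⟩
          cases a; cases b
          exact hne rfl
    · intro i
      have key : ∀ u : Finset (resemType l ⊕ Unit),
          (∀ x, x ∈ u ↔ Sum.elim c (fun _ => v) x = i) →
          u.card = (v :: l).count i + 1 := by
        intro u hu
        rw [← Finset.card_toLeft_add_card_toRight]
        have hL : u.toLeft = Finset.univ.filter fun x => c x = i := by
          ext x
          simp [hu (Sum.inl x)]
        have hR : u.toRight = if v = i then {()} else (∅ : Finset Unit) := by
          ext x
          cases x
          by_cases h : v = i <;> simp [h, hu (Sum.inr ())]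
        rw [hL, hR, hcard i, count_cons' l i v]
        by_cases h : v = i
        · rw [if_pos h, if_pos h.symm]
          simp
        · rw [if_neg h, if_neg (fun hh : i = v => h hh.symm)]
          simp
      exact key _ (fun x => Finset.mem_filter.trans (and_iff_right (Finset.mem_univ _)))

end StructResem

section StructLemmas

variable {V : Type*} [Fintype V] [DecidableEq V] {Γ : SimpleGraph V} {c : V → Fin 5}

private lemma not_adj_struct (hc : IsC5Struct Γ c) {x y : V} (hxy : x ≠ y)
    (h : ¬Γ.Adj x y) : c x ≠ c y ∧ ¬cycle5.Adj (c x) (c y) := by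
  rw [hc] at h
  push_neg at h
  exact h hxy

private lemma adj_class (hc : IsC5Struct Γ c) {x y : V} (h : Γ.Adj x y) :
    c x = c y ∨ cycle5.Adj (c x) (c y) := ((hc x y).1 h).2

private lemma kminus_classify (hc : IsC5Struct Γ c) {s : Finset V} (hs : IsKMinusOn Γ s) :
    ∃ a ∈ s, ∃ b ∈ s, a ≠ b ∧ ¬Γ.Adj a b ∧ c b = c a + 2 ∧
      (∀ x ∈ s, ∀ y ∈ s, x ≠ y → ¬Γ.Adj x y → (x = a ∧ y = b) ∨ (x = b ∧ y = a)) ∧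
      (∀ x ∈ s, x ≠ a → x ≠ b → c x = c a + 1) := by
  obtain ⟨a, ha, b, hb, hab, hnadj, huniq⟩ := hs
  obtain ⟨hne, hcyc⟩ := not_adj_struct hc hab hnadj
  have key : ∀ a' ∈ s, ∀ b' ∈ s, a' ≠ b' → ¬Γ.Adj a' b' → c b' = c a' + 2 →
      (∀ x ∈ s, ∀ y ∈ s, x ≠ y → ¬Γ.Adj x y → (x = a' ∧ y = b') ∨ (x = b' ∧ y = a')) →
      ∀ x ∈ s, x ≠ a' → x ≠ b' → c x = c a' + 1 := by
    intro a' ha' b' hb' hab' hnadj' hcb' huniq' x hx hxa hxb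
    have hadjxa : Γ.Adj x a' := by
      by_contra hn
      rcases huniq' x hx a' ha' hxa hn with ⟨h1, h2⟩ | ⟨h1, h2⟩
      · exact hxa h1
      · exact hxb h1
    have hadjxb : Γ.Adj x b' := by
      by_contra hn
      rcases huniq' x hx b' hb' hxb hn with ⟨h1, h2⟩ | ⟨h1, h2⟩
      · exact hxa h1
      · exact hxb h1
    exact f5_mid (c a') (c x) (adj_class hc hadjxa) (hcb' ▸ adj_class hc hadjxb)
  rcases f5_nonadj (c a) (c b) hne hcyc with h2 | h2
  · exact ⟨a, ha, b, hb, hab, hnadj, h2, huniq,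
      key a ha b hb hab hnadj h2 huniq⟩
  · have hnadj' : ¬Γ.Adj b a := fun h => hnadj h.symm
    have huniq' : ∀ x ∈ s, ∀ y ∈ s, x ≠ y → ¬Γ.Adj x y →
        (x = b ∧ y = a) ∨ (x = a ∧ y = b) := by
      intro x hx y hy hxy hn
      exact (huniq x hx y hy hxy hn).symm
    exact ⟨b, hb, a, ha, hab.symm, hnadj', h2, huniq',
      key b hb a ha hab.symm hnadj' h2 huniq'⟩

/-- Construction of a maximal `K⁻` set of size `≥ 4` around a class with two elements. -/
private lemma maximal_construct (hc : IsC5Struct Γ c) (hfib : ∀ m : Fin 5, ∃ x, c x = m)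
    {j : Fin 5} {p q : V} (hp : c p = j) (hq : c q = j) (hpq : p ≠ q) :
    ∃ a b : V, c a = j + 4 ∧ c b = j + 1 ∧
      IsMaximalKMinusOn Γ (insert a (insert b (Finset.univ.filter fun x => c x = j))) ∧
      4 ≤ (insert a (insert b (Finset.univ.filter fun x => c x = j))).card := by
  obtain ⟨a, ha⟩ := hfib (j + 4)
  obtain ⟨b, hb⟩ := hfib (j + 1)
  set F : Finset V := Finset.univ.filter fun x => c x = j with hF
  have hmemF : ∀ x : V, x ∈ F ↔ c x = j := by
    intro x; simp [hF]
  have haS : a ∈ insert a (insert b F) := Finset.mem_insert_self _ _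
  have hbS : b ∈ insert a (insert b F) :=
    Finset.mem_insert_of_mem (Finset.mem_insert_self _ _)
  have hab : a ≠ b := by
    intro h
    rw [h, hb] at ha
    exact f5_ne41 j ha.symm
  have hclsS : ∀ x ∈ insert a (insert b F), c x = j + 4 ∨ c x = j ∨ c x = j + 1 := by
    intro x hx
    rcases Finset.mem_insert.1 hx with rfl | hx
    · exact Or.inl ha
    rcases Finset.mem_insert.1 hx with rfl | hx
    · exact Or.inr (Or.inr hb)
    · exact Or.inr (Or.inl ((hmemF x).1 hx))
  have hxa : ∀ x ∈ insert a (insert b F), c x = j + 4 → x = a := by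
    intro x hx hcx
    rcases Finset.mem_insert.1 hx with rfl | hx
    · rfl
    rcases Finset.mem_insert.1 hx with rfl | hx
    · rw [hb] at hcx; exact absurd hcx.symm (f5_ne41 j)
    · rw [(hmemF x).1 hx] at hcx; exact absurd hcx (f5_ne4 j)
  have hxb : ∀ x ∈ insert a (insert b F), c x = j + 1 → x = b := by
    intro x hx hcx
    rcases Finset.mem_insert.1 hx with rfl | hx
    · rw [ha] at hcx; exact absurd hcx (f5_ne41 j)
    rcases Finset.mem_insert.1 hx with rfl | hx
    · rfl
    · rw [(hmemF x).1 hx] at hcx; exact absurd hcx (f5_ne1 j)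
  have hnadj : ¬Γ.Adj a b := by
    rw [hc]
    rintro ⟨-, h | h⟩
    · rw [ha, hb] at h; exact f5_ne41 j h
    · rw [ha, hb] at h; exact f5_nadj41 j h
  have hK : IsKMinusOn Γ (insert a (insert b F)) := by
    refine ⟨a, haS, b, hbS, hab, hnadj, ?_⟩
    intro x hx y hy hxy hn
    obtain ⟨hne, hcy⟩ := not_adj_struct hc hxy hn
    rcases f5_pair j (c x) (c y) (hclsS x hx) (hclsS y hy) hne hcy with ⟨h1, h2⟩ | ⟨h1, h2⟩
    · exact Or.inl ⟨hxa x hx h1, hxb y hy h2⟩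
    · exact Or.inr ⟨hxb x hx h1, hxa y hy h2⟩
  refine ⟨a, b, ha, hb, ⟨hK, ?_⟩, ?_⟩
  · intro v hv hKv
    obtain ⟨a', ha', b', hb', hab', hnadj', huniq'⟩ := hKv
    have hpair : (a = a' ∧ b = b') ∨ (a = b' ∧ b = a') :=
      huniq' a (Finset.mem_insert_of_mem haS) b (Finset.mem_insert_of_mem hbS) hab hnadj
    have hvmem : v ∈ insert v (insert a (insert b F)) := Finset.mem_insert_self _ _
    have hva : Γ.Adj v a := by
      by_contra hn
      rcases huniq' v hvmem a (Finset.mem_insert_of_mem haS)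
          (fun h => hv (h ▸ haS)) hn with ⟨h1, h2⟩ | ⟨h1, h2⟩
      · rcases hpair with ⟨g1, g2⟩ | ⟨g1, g2⟩
        · exact hv ((h1.trans g1.symm) ▸ haS)
        · exact hv ((h1.trans g2.symm) ▸ hbS)
      · rcases hpair with ⟨g1, g2⟩ | ⟨g1, g2⟩
        · exact hv ((h1.trans g2.symm) ▸ hbS)
        · exact hv ((h1.trans g1.symm) ▸ haS)
    have hvb : Γ.Adj v b := by
      by_contra hn
      rcases huniq' v hvmem b (Finset.mem_insert_of_mem hbS)
          (fun h => hv (h ▸ hbS)) hn with ⟨h1, h2⟩ | ⟨h1, h2⟩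
      · rcases hpair with ⟨g1, g2⟩ | ⟨g1, g2⟩
        · exact hv ((h1.trans g1.symm) ▸ haS)
        · exact hv ((h1.trans g2.symm) ▸ hbS)
      · rcases hpair with ⟨g1, g2⟩ | ⟨g1, g2⟩
        · exact hv ((h1.trans g2.symm) ▸ hbS)
        · exact hv ((h1.trans g1.symm) ▸ haS)
    have hcv : c v = j := f5_common j (c v) (ha ▸ adj_class hc hva) (hb ▸ adj_class hc hvb)
    exact hv (Finset.mem_insert_of_mem (Finset.mem_insert_of_mem ((hmemF v).2 hcv)))
  · have h2F : 2 ≤ F.card :=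
      Finset.one_lt_card.2 ⟨p, (hmemF p).2 hp, q, (hmemF q).2 hq, hpq⟩
    have hbF : b ∉ F := by
      intro h
      rw [(hmemF b).1 h] at hb
      exact f5_ne1 j hb
    have haF : a ∉ insert b F := by
      intro h
      rcases Finset.mem_insert.1 h with rfl | h
      · exact hab rfl
      · rw [(hmemF a).1 h] at ha
        exact f5_ne4 j ha
    rw [Finset.card_insert_of_notMem haF, Finset.card_insert_of_notMem hbF]
    omega

/-- When all classes except class `0` are singletons, a maximal `K⁻` set of size `≥ 4`
is uniquely determined. -/
private lemma maximal_eq_of_singletons (hc : IsC5Struct Γ c)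
    (hsing : ∀ i : Fin 5, i ≠ 0 → ∀ x y, c x = i → c y = i → x = y)
    {s : Finset V} (hcard : 4 ≤ s.card) (hs : IsMaximalKMinusOn Γ s) :
    s = Finset.univ.filter fun x => c x = 0 ∨ c x = 1 ∨ c x = 4 := by
  obtain ⟨a, ha, b, hb, hab, hnadj, hcb, huniq, hmid⟩ := kminus_classify hc hs.1
  have h2 : 1 < (s \ {a, b}).card := by
    have h1 := Finset.le_card_sdiff ({a, b} : Finset V) s
    have h3 : ({a, b} : Finset V).card ≤ 2 := Finset.card_insert_le _ _ |>.trans (by simp)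
    omega
  obtain ⟨x, hx, y, hy, hxy⟩ := Finset.one_lt_card.1 h2
  obtain ⟨hxs, hxab⟩ := Finset.mem_sdiff.1 hx
  obtain ⟨hys, hyab⟩ := Finset.mem_sdiff.1 hy
  have hcx : c x = c a + 1 :=
    hmid x hxs (fun h => hxab (by simp [h])) (fun h => hxab (by simp [h]))
  have hcy : c y = c a + 1 :=
    hmid y hys (fun h => hyab (by simp [h])) (fun h => hyab (by simp [h]))
  have h0 : c a + 1 = 0 := by
    by_contra h
    exact hxy (hsing _ h x y hcx hcy)
  have hca : c a = 4 := f5_suc0 (c a) h0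
  have hcb1 : c b = 1 := by
    rw [hcb, hca]
    decide
  have hmid0 : ∀ z ∈ s, z ≠ a → z ≠ b → c z = 0 := by
    intro z hz hza hzb
    rw [hmid z hz hza hzb, h0]
  ext z
  simp only [Finset.mem_filter, Finset.mem_univ, true_and]
  constructor
  · intro hz
    by_cases hza : z = a
    · subst hza; exact Or.inr (Or.inr hca)
    by_cases hzb : z = b
    · subst hzb; exact Or.inr (Or.inl hcb1)
    · exact Or.inl (hmid0 z hz hza hzb)
  · intro hz
    rcases hz with h0z | h1z | h4z
    · by_contra hzs
      apply hs.2 z hzs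
      have hadjz : ∀ w ∈ s, Γ.Adj z w := by
        intro w hw
        apply (hc z w).2
        refine ⟨fun h => hzs (h ▸ hw), ?_⟩
        by_cases hwa : w = a
        · subst hwa
          rw [h0z, hca]
          exact Or.inr (by decide)
        by_cases hwb : w = b
        · subst hwb
          rw [h0z, hcb1]
          exact Or.inr (by decide)
        · exact Or.inl (by rw [h0z, hmid0 w hw hwa hwb])
      refine ⟨a, Finset.mem_insert_of_mem ha, b, Finset.mem_insert_of_mem hb, hab, hnadj, ?_⟩
      intro u hu w hw huw hn
      rcases Finset.mem_insert.1 hu with huz | hu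
      · rcases Finset.mem_insert.1 hw with hwz | hw
        · exact absurd (huz.trans hwz.symm) huw
        · exact absurd (by rw [huz]; exact hadjz w hw : Γ.Adj u w) hn
      rcases Finset.mem_insert.1 hw with hwz | hw
      · exact absurd (by rw [hwz]; exact (hadjz u hu).symm : Γ.Adj u w) hn
      · exact huniq u hu w hw huw hn
    · have : z = b := hsing 1 (by decide) z b h1z hcb1
      exact this ▸ hb
    · have : z = a := hsing 4 (by decide) z a h4z hca
      exact this ▸ ha

end StructLemmas

/-- Let `Γ` be a reseminant graph. Then `Γ` is isomorphic to `R̃_k` for some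
integer `k ≥ 0` if and only if `Γ` has at most one maximal `K⁻_i` induced subgraph with
`i ≥ 4`. -/
theorem isomorphic_tildeR_iff_unique_maximal_KMinus {V : Type*} [Fintype V] [DecidableEq V]
    (Γ : SimpleGraph V) (h : IsReseminant Γ) :
    (∃ k : ℕ, Nonempty (Γ ≃g tildeR k)) ↔
      ∀ s t : Finset V, 4 ≤ s.card → 4 ≤ t.card →
        IsMaximalKMinusOn Γ s → IsMaximalKMinusOn Γ t → s = t := by
  constructor
  · rintro ⟨k, ⟨e0⟩⟩ s t hs4 ht4 hs ht
    obtain ⟨cT, hcT, hoT, hcardT⟩ := struct_resem (List.replicate k 0)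
    have e : Γ ≃g resemGraph (List.replicate k 0) := e0
    set c : V → Fin 5 := fun x => cT (e x) with hcdef
    have hc : IsC5Struct Γ c := by
      intro u w
      rw [← e.map_adj_iff, hcT (e u) (e w)]
      simp only [ne_eq, EmbeddingLike.apply_eq_iff_eq, hcdef]
    have hsing : ∀ i : Fin 5, i ≠ 0 → ∀ x y, c x = i → c y = i → x = y := by
      intro i hi x y hx hy
      have h1 : (Finset.univ.filter fun z => cT z = i).card = 1 := by
        rw [hcardT i, count_replicate' k i, if_neg hi]
      have h2 := Finset.card_le_one.1 h1.le (e x)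
        (Finset.mem_filter.2 ⟨Finset.mem_univ _, hx⟩) (e y)
        (Finset.mem_filter.2 ⟨Finset.mem_univ _, hy⟩)
      exact e.toEquiv.injective h2
    rw [maximal_eq_of_singletons hc hsing hs4 hs,
      maximal_eq_of_singletons hc hsing ht4 ht]
  · intro H
    obtain ⟨l, ⟨e⟩⟩ := h
    obtain ⟨cl, hcl, hol, hcardl⟩ := struct_resem l
    set c : V → Fin 5 := fun x => cl (e x) with hcdef
    have hc : IsC5Struct Γ c := by
      intro u w
      rw [← e.map_adj_iff, hcl (e u) (e w)]
      simp only [ne_eq, EmbeddingLike.apply_eq_iff_eq, hcdef]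
    have hfib : ∀ m : Fin 5, ∃ x, c x = m := by
      intro m
      refine ⟨e.symm (origVert l m), ?_⟩
      show cl (e (e.symm (origVert l m))) = m
      rw [RelIso.apply_symm_apply]
      exact hol m
    have hone : ∀ i j : Fin 5, l.count i ≠ 0 → l.count j ≠ 0 → i = j := by
      intro i j hi hj
      by_contra hij
      have hfib2 : ∀ m : Fin 5, l.count m ≠ 0 → ∃ p q : V, c p = m ∧ c q = m ∧ p ≠ q := by
        intro m hm
        have h2 : 1 < (Finset.univ.filter fun z : resemType l => cl z = m).card := by
          rw [hcardl m]; omega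
        obtain ⟨y1, hy1, y2, hy2, hy⟩ := Finset.one_lt_card.1 h2
        refine ⟨e.symm y1, e.symm y2, ?_, ?_, ?_⟩
        · show cl (e (e.symm y1)) = m
          rw [RelIso.apply_symm_apply]
          exact (Finset.mem_filter.1 hy1).2
        · show cl (e (e.symm y2)) = m
          rw [RelIso.apply_symm_apply]
          exact (Finset.mem_filter.1 hy2).2
        · intro hh
          have h3 := congrArg e hh
          rw [RelIso.apply_symm_apply, RelIso.apply_symm_apply] at h3
          exact hy h3
      obtain ⟨p, q, hp, hq, hpq⟩ := hfib2 i hi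
      obtain ⟨p', q', hp', hq', hpq'⟩ := hfib2 j hj
      obtain ⟨a, b, hca, hcb, hmax, hc4⟩ := maximal_construct hc hfib hp hq hpq
      obtain ⟨a', b', hca', hcb', hmax', hc4'⟩ := maximal_construct hc hfib hp' hq' hpq'
      have hst := H _ _ hc4 hc4' hmax hmax'
      have hmem : ∀ z : V, c z = i → z = a' ∨ z = b' := by
        intro z hz
        have hzs : z ∈ insert a (insert b (Finset.univ.filter fun x => c x = i)) :=
          Finset.mem_insert_of_mem (Finset.mem_insert_of_mem
            (Finset.mem_filter.2 ⟨Finset.mem_univ _, hz⟩))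
        rw [hst] at hzs
        rcases Finset.mem_insert.1 hzs with h' | hzs
        · exact Or.inl h'
        rcases Finset.mem_insert.1 hzs with h' | hzs
        · exact Or.inr h'
        · exact absurd (hz.symm.trans (Finset.mem_filter.1 hzs).2) hij
      rcases hmem p hp with h1 | h1 <;> rcases hmem q hq with h2 | h2
      · exact hpq (h1.trans h2.symm)
      · apply f5_ne41 j
        rw [← hca', ← hcb', ← h1, ← h2, hp, hq]
      · apply f5_ne41 j
        rw [← hca', ← hcb', ← h2, ← h1, hq, hp]
      · exact hpq (h1.trans h2.symm)
    have hex : ∃ i0 : Fin 5, ∀ i, i ≠ i0 → l.count i = 0 := by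
      by_cases hl : ∀ i : Fin 5, l.count i = 0
      · exact ⟨0, fun i _ => hl i⟩
      · push_neg at hl
        obtain ⟨i0, hi0⟩ := hl
        refine ⟨i0, fun i hi => ?_⟩
        by_contra hcn
        exact hi (hone i i0 hcn hi0)
    obtain ⟨i0, hcnt⟩ := hex
    refine ⟨l.count i0, ?_⟩
    obtain ⟨c0, hc0, ho0, hcard0⟩ := struct_resem (List.replicate (l.count i0) 0)
    set c' : V → Fin 5 := fun x => c x - i0 with hc'def
    have hc' : IsC5Struct Γ c' := by
      intro u w
      rw [hc u w]
      constructor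
      · rintro ⟨hne, h'⟩
        refine ⟨hne, ?_⟩
        rcases h' with h' | h'
        · exact Or.inl (show c u - i0 = c w - i0 by rw [h'])
        · exact Or.inr ((f5_rot (c u) (c w) i0).1 h')
      · rintro ⟨hne, h'⟩
        refine ⟨hne, ?_⟩
        rcases h' with h' | h'
        · exact Or.inl (sub_left_inj.1 h')
        · exact Or.inr ((f5_rot (c u) (c w) i0).2 h')
    have hcards : ∀ m : Fin 5, Fintype.card {x : V // c' x = m}
        = Fintype.card {y : resemType (List.replicate (l.count i0) 0) // c0 y = m} := by
      intro m
      have h1 : Fintype.card {x : V // c' x = m}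
          = Fintype.card {y : resemType l // cl y = m + i0} := by
        apply Fintype.card_congr
        refine Equiv.subtypeEquiv e.toEquiv ?_
        intro x
        show c x - i0 = m ↔ cl (e x) = m + i0
        rw [sub_eq_iff_eq_add]
      rw [h1, Fintype.card_subtype, Fintype.card_subtype, hcardl, hcard0, count_replicate']
      by_cases hm : m = 0
      · subst hm
        rw [if_pos rfl, zero_add]
      · rw [if_neg hm, hcnt (m + i0)
          (fun hmi => hm (add_right_cancel (hmi.trans (zero_add i0).symm)))]
    refine ⟨⟨Equiv.ofFiberEquiv (f := c') (g := c0)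
      (fun m => Fintype.equivOfCardEq (hcards m)), ?_⟩⟩
    intro a b
    set f := Equiv.ofFiberEquiv (f := c') (g := c0)
      (fun m => Fintype.equivOfCardEq (hcards m)) with hfdef
    have hf : ∀ x, c0 (f x) = c' x := fun x => Equiv.ofFiberEquiv_map _ x
    show (resemGraph (List.replicate (l.count i0) 0)).Adj (f a) (f b) ↔ Γ.Adj a b
    rw [hc0 (f a) (f b), hc' a b, hf a, hf b]
    simp only [ne_eq, EmbeddingLike.apply_eq_iff_eq]
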